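/- First-order bound via inverse inequality: let ω_h be a piecewise polynomial (finite element) function on a shape-regular mesh of size h satisfying the inverse inequality ‖∇·ω_h‖_{L²} ≤ C h^{−1} ‖ω_h‖_{L²}, let ℓ ∈ W^{1,∞} with ‖ℓ − Π₀ℓ‖_{L^∞} ≤ C h, and let r ∈ H¹ with ‖(I − Π_R) r‖_{L²} ≤ C h where Π_R is an L²-projection. Then |(ℓ ∇·ω_h, (I − Π_R) r)_{L²}| ≤ C h ‖ω_h‖_{L²} ‖r‖_{H¹}, provided (∇·ω_h, (I−Π_R)r) = 0 for piecewise constant multipliers (i.e., (Π₀ℓ ∇·ω_h, (I−Π_R)r)_{L²} = 0). -/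

import Mathlib

open MeasureTheory

/-- First-order bound via inverse inequality: if ‖∇·ω_h‖ ≤ C h⁻¹ ‖ω_h‖,
‖ℓ − Π₀ℓ‖_∞ ≤ C h, ‖(I − Π_R)r‖ ≤ C h ‖r‖_{H¹}, and the piecewise-constant part
of ℓ is orthogonal, then |(ℓ ∇·ω_h, (I − Π_R)r)| ≤ C³ h ‖ω_h‖ ‖r‖_{H¹}. -/
theorem first_order_bound_inverse_inequality {α : Type*} [MeasurableSpace α]
    (μ : Measure α) (C h ωnorm rnorm : ℝ)
    (hC : 0 < C) (hh : 0 < h) (hω : 0 ≤ ωnorm) (hr : 0 ≤ rnorm)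
    (ℓ ℓ0 dω e : α → ℝ)
    (hℓm : AEStronglyMeasurable ℓ μ) (hℓ0m : AEStronglyMeasurable ℓ0 μ)
    (hdω : MemLp dω 2 μ) (he : MemLp e 2 μ)
    (hℓ : ∀ᵐ x ∂μ, |ℓ x - ℓ0 x| ≤ C * h)
    (hinv : ∫ x, (dω x) ^ 2 ∂μ ≤ (C * h⁻¹ * ωnorm) ^ 2)
    (happrox : ∫ x, (e x) ^ 2 ∂μ ≤ (C * h * rnorm) ^ 2)
    (horth : ∫ x, ℓ0 x * dω x * e x ∂μ = 0) :
    |∫ x, ℓ x * dω x * e x ∂μ| ≤ C ^ 3 * h * ωnorm * rnorm := by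
  have hRHS : 0 ≤ C ^ 3 * h * ωnorm * rnorm := by positivity
  -- integrability of the product dω * e
  have Iprod : Integrable (fun x => dω x * e x) μ := by
    refine Integrable.mono' ((hdω.integrable_sq.add he.integrable_sq).div_const 2)
      (hdω.1.mul he.1) (Filter.Eventually.of_forall fun x => ?_)
    have := sq_nonneg (|dω x| - |e x|)
    have habs : ‖dω x * e x‖ = |dω x| * |e x| := abs_mul _ _
    show ‖dω x * e x‖ ≤ (dω x ^ 2 + e x ^ 2) / 2
    rw [habs]
    nlinarith [sq_abs (dω x), sq_abs (e x)]
  -- integrability of (ℓ - ℓ0) * dω * e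
  have I1 : Integrable (fun x => (ℓ x - ℓ0 x) * dω x * e x) μ := by
    refine Integrable.mono' ((Iprod.abs).const_mul (C * h))
      (((hℓm.sub hℓ0m).mul hdω.1).mul he.1) ?_
    filter_upwards [hℓ] with x hx
    have : ‖(ℓ x - ℓ0 x) * dω x * e x‖ = |ℓ x - ℓ0 x| * |dω x * e x| := by
      rw [Real.norm_eq_abs, mul_assoc, abs_mul]
    rw [this]
    exact mul_le_mul_of_nonneg_right hx (abs_nonneg _)
  -- Cauchy–Schwarz bound on ∫ |dω| * |e|
  have hpq : Real.HolderConjugate 2 2 := Real.HolderConjugate.two_two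
  have hdω2 : MemLp dω (ENNReal.ofReal 2) μ := by
    simpa [ENNReal.ofReal_ofNat] using hdω
  have he2 : MemLp e (ENNReal.ofReal 2) μ := by
    simpa [ENNReal.ofReal_ofNat] using he
  have CS := integral_mul_norm_le_Lp_mul_Lq (μ := μ) hpq hdω2 he2
  have hsq1 : ∀ (f : α → ℝ) (x : α), ‖f x‖ ^ (2 : ℝ) = (f x) ^ 2 := by
    intro f x
    rw [show ((2:ℝ)) = ((2:ℕ):ℝ) by norm_num, Real.rpow_natCast, Real.norm_eq_abs, sq_abs]
  have hK : (0:ℝ) ≤ C * h⁻¹ * ωnorm := by positivity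
  have hM : (0:ℝ) ≤ C * h * rnorm := by positivity
  have hint1 : (∫ a, ‖dω a‖ ^ (2:ℝ) ∂μ) ^ ((1:ℝ)/2) ≤ C * h⁻¹ * ωnorm := by
    have h1 : ∫ a, ‖dω a‖ ^ (2:ℝ) ∂μ = ∫ a, (dω a) ^ 2 ∂μ := by
      simp_rw [hsq1 dω]
    rw [h1]
    have hnn : 0 ≤ ∫ a, (dω a) ^ 2 ∂μ := integral_nonneg fun a => sq_nonneg _
    rw [← Real.sqrt_eq_rpow]
    calc Real.sqrt (∫ a, (dω a) ^ 2 ∂μ) ≤ Real.sqrt ((C * h⁻¹ * ωnorm) ^ 2) :=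
          Real.sqrt_le_sqrt hinv
      _ = C * h⁻¹ * ωnorm := Real.sqrt_sq hK
  have hint2 : (∫ a, ‖e a‖ ^ (2:ℝ) ∂μ) ^ ((1:ℝ)/2) ≤ C * h * rnorm := by
    have h1 : ∫ a, ‖e a‖ ^ (2:ℝ) ∂μ = ∫ a, (e a) ^ 2 ∂μ := by
      simp_rw [hsq1 e]
    rw [h1]
    rw [← Real.sqrt_eq_rpow]
    calc Real.sqrt (∫ a, (e a) ^ 2 ∂μ) ≤ Real.sqrt ((C * h * rnorm) ^ 2) :=
          Real.sqrt_le_sqrt happrox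
      _ = C * h * rnorm := Real.sqrt_sq hM
  have hCS2 : ∫ a, ‖dω a‖ * ‖e a‖ ∂μ ≤ (C * h⁻¹ * ωnorm) * (C * h * rnorm) := by
    refine CS.trans ?_
    have hnn2 : (0:ℝ) ≤ (∫ a, ‖dω a‖ ^ (2:ℝ) ∂μ) ^ ((1:ℝ)/2) := by
      apply Real.rpow_nonneg
      exact integral_nonneg fun a => Real.rpow_nonneg (norm_nonneg _) _
    exact mul_le_mul hint1 hint2 (Real.rpow_nonneg
      (integral_nonneg fun a => Real.rpow_nonneg (norm_nonneg _) _) _) hK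
  -- bound on the integral of (ℓ - ℓ0) * dω * e
  have key : |∫ x, (ℓ x - ℓ0 x) * dω x * e x ∂μ| ≤ C ^ 3 * h * ωnorm * rnorm := by
    calc |∫ x, (ℓ x - ℓ0 x) * dω x * e x ∂μ|
        ≤ ∫ x, ‖(ℓ x - ℓ0 x) * dω x * e x‖ ∂μ := by
          rw [← Real.norm_eq_abs]; exact norm_integral_le_integral_norm _
      _ ≤ ∫ x, (C * h) * (‖dω x‖ * ‖e x‖) ∂μ := by
          refine integral_mono_ae I1.norm (by
            simpa [mul_assoc] using (Iprod.norm.const_mul (C * h))) ?_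
          filter_upwards [hℓ] with x hx
          have : ‖(ℓ x - ℓ0 x) * dω x * e x‖ = |ℓ x - ℓ0 x| * (‖dω x‖ * ‖e x‖) := by
            simp [Real.norm_eq_abs, abs_mul, mul_assoc]
          rw [this]
          exact mul_le_mul_of_nonneg_right hx (by positivity)
      _ = (C * h) * ∫ x, ‖dω x‖ * ‖e x‖ ∂μ := integral_const_mul _ _
      _ ≤ (C * h) * ((C * h⁻¹ * ωnorm) * (C * h * rnorm)) := by
          refine mul_le_mul_of_nonneg_left hCS2 (by positivity)
      _ = C ^ 3 * h * ωnorm * rnorm := by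
          field_simp
  by_cases hInt : Integrable (fun x => ℓ x * dω x * e x) μ
  · have I0 : Integrable (fun x => ℓ0 x * dω x * e x) μ := by
      have : (fun x => ℓ0 x * dω x * e x)
          = fun x => ℓ x * dω x * e x - (ℓ x - ℓ0 x) * dω x * e x := by
        funext x; ring
      rw [this]; exact hInt.sub I1
    have hsplit : ∫ x, ℓ x * dω x * e x ∂μ
        = ∫ x, (ℓ x - ℓ0 x) * dω x * e x ∂μ + ∫ x, ℓ0 x * dω x * e x ∂μ := by
      rw [← integral_add I1 I0]
      congr 1; funext x; ring
    rw [hsplit, horth, add_zero]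
    exact key
  · rw [integral_undef hInt]
    simpa using hRHS
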